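/- (Theorem 1, Item 1, tractability characterization for Λ^all, eigenvalue-counting form.) Let b be a prime, α, β > 1 reals, and let 0 < γ_j^{(1)} ≤ 1 and 0 < γ_j^{(2)} ≤ 1 for all j. Then there exist constants C, τ ≥ 0 such that N(ε,s,t) ≤ C ε^{-τ} for all ε ∈ (0,1) and all s,t ∈ ℕ, if and only if s_γ < ∞. -/

import Mathlib

open scoped BigOperators

/-- The Walsh-space decay function ρ_{α,γ} : ℕ → ℝ,
    ρ_{α,γ}(0) = 1 and ρ_{α,γ}(k) = γ·b^{-α·⌊log_b k⌋} for k ≥ 1. -/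
noncomputable def rho (b : ℕ) (α γ : ℝ) (k : ℕ) : ℝ :=
  if k = 0 then 1 else γ * (b : ℝ) ^ (-(α * (Nat.log b k : ℝ)))

/-- The Korobov-space decay function r_{β,γ} : ℤ → ℝ,
    r_{β,γ}(0) = 1 and r_{β,γ}(l) = γ·|l|^{-β} for l ≠ 0. -/
noncomputable def rK (β γ : ℝ) (l : ℤ) : ℝ :=
  if l = 0 then 1 else γ * |(l : ℝ)| ^ (-β)

/-- N(ε,s,t): the number of pairs (k,l) ∈ ℕ^s × ℤ^t with
    ρ_{α,γ^{(1)}}(k)·r_{β,γ^{(2)}}(l) > ε²; this equals the information complexity of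
    L₂-approximation in the hybrid Walsh–Korobov space for the class Λ^all. -/
noncomputable def Ncount (b : ℕ) (α β : ℝ) (γ1 γ2 : ℕ → ℝ) (ε : ℝ) (s t : ℕ) : ℕ :=
  {p : (Fin s → ℕ) × (Fin t → ℤ) |
    (∏ j : Fin s, rho b α (γ1 j) (p.1 j)) * (∏ j : Fin t, rK β (γ2 j) (p.2 j)) > ε ^ 2}.ncard

/-- The sum exponent s_γ = inf{κ > 0 : ∑_j (γ_j^{(1)})^κ < ∞ and ∑_j (γ_j^{(2)})^κ < ∞},
    with inf ∅ = ∞ (an element of ℝ≥0∞). -/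
noncomputable def sGamma (γ1 γ2 : ℕ → ℝ) : ENNReal :=
  sInf {x : ENNReal | ∃ κ : ℝ, 0 < κ ∧ x = ENNReal.ofReal κ ∧
    Summable (fun j => γ1 j ^ κ) ∧ Summable (fun j => γ2 j ^ κ)}

lemma bR_pos {b : ℕ} (hb : 2 ≤ b) : (0:ℝ) < b := by exact_mod_cast by omega
lemma bR_one {b : ℕ} (hb : 2 ≤ b) : (1:ℝ) ≤ b := by exact_mod_cast by omega

lemma rho_pos {b : ℕ} {α γ : ℝ} (hb : 2 ≤ b) (hγ : 0 < γ) (k : ℕ) : 0 < rho b α γ k := by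
  unfold rho; split
  · norm_num
  · exact mul_pos hγ (Real.rpow_pos_of_pos (bR_pos hb) _)

lemma rK_pos {β γ : ℝ} (hγ : 0 < γ) (l : ℤ) : 0 < rK β γ l := by
  unfold rK; split
  · norm_num
  · rename_i h
    refine mul_pos hγ (Real.rpow_pos_of_pos ?_ _)
    simpa using (abs_pos.mpr (by exact_mod_cast h : ((l:ℝ)) ≠ 0))

lemma abs_int_one_le {l : ℤ} (h : l ≠ 0) : (1:ℝ) ≤ |(l:ℝ)| := by
  have h1 : (1:ℤ) ≤ |l| := Int.one_le_abs (by omega)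
  calc (1:ℝ) ≤ ((|l| : ℤ) : ℝ) := by exact_mod_cast h1
  _ = |(l:ℝ)| := Int.cast_abs

lemma rho_le_one {b : ℕ} {α γ : ℝ} (hb : 2 ≤ b) (hα : 0 ≤ α) (hγ0 : 0 < γ) (hγ1 : γ ≤ 1)
    (k : ℕ) : rho b α γ k ≤ 1 := by
  unfold rho; split
  · exact le_rfl
  · have h2 : (b:ℝ) ^ (-(α * (Nat.log b k : ℝ))) ≤ 1 :=
      Real.rpow_le_one_of_one_le_of_nonpos (bR_one hb) (neg_nonpos.mpr (by positivity))
    nlinarith [Real.rpow_pos_of_pos (bR_pos hb) (-(α * (Nat.log b k : ℝ)))]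

lemma rK_le_one {β γ : ℝ} (hβ : 0 ≤ β) (hγ0 : 0 < γ) (hγ1 : γ ≤ 1) (l : ℤ) :
    rK β γ l ≤ 1 := by
  unfold rK; split
  · exact le_rfl
  · rename_i h
    have h1 := abs_int_one_le h
    have h2 : |(l:ℝ)| ^ (-β) ≤ 1 :=
      Real.rpow_le_one_of_one_le_of_nonpos h1 (by linarith)
    nlinarith [Real.rpow_pos_of_pos (lt_of_lt_of_le one_pos h1) (-β)]


section
variable {b : ℕ} {α β : ℝ} {γ1 γ2 : ℕ → ℝ}

lemma prod_rho_le_one (hb : 2 ≤ b) (hα : 0 ≤ α) (hγ1 : ∀ j, 0 < γ1 j ∧ γ1 j ≤ 1)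
    {s : ℕ} (x : Fin s → ℕ) : (∏ j : Fin s, rho b α (γ1 j) (x j)) ≤ 1 :=
  Finset.prod_le_one (fun j _ => (rho_pos hb (hγ1 j).1 _).le)
    (fun j _ => rho_le_one hb hα (hγ1 j).1 (hγ1 j).2 _)

lemma prod_rK_le_one (hβ : 0 ≤ β) (hγ2 : ∀ j, 0 < γ2 j ∧ γ2 j ≤ 1)
    {t : ℕ} (y : Fin t → ℤ) : (∏ j : Fin t, rK β (γ2 j) (y j)) ≤ 1 :=
  Finset.prod_le_one (fun j _ => (rK_pos (hγ2 j).1 _).le)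
    (fun j _ => rK_le_one hβ (hγ2 j).1 (hγ2 j).2 _)

lemma prod_rho_pos (hb : 2 ≤ b) (hγ1 : ∀ j, 0 < γ1 j ∧ γ1 j ≤ 1)
    {s : ℕ} (x : Fin s → ℕ) : 0 < (∏ j : Fin s, rho b α (γ1 j) (x j)) :=
  Finset.prod_pos (fun j _ => rho_pos hb (hγ1 j).1 _)

lemma prod_rK_pos (hγ2 : ∀ j, 0 < γ2 j ∧ γ2 j ≤ 1)
    {t : ℕ} (y : Fin t → ℤ) : 0 < (∏ j : Fin t, rK β (γ2 j) (y j)) :=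
  Finset.prod_pos (fun j _ => rK_pos (hγ2 j).1 _)

lemma prod_le_rho (hb : 2 ≤ b) (hα : 0 ≤ α) (hγ1 : ∀ j, 0 < γ1 j ∧ γ1 j ≤ 1)
    {s : ℕ} (x : Fin s → ℕ) (i : Fin s) :
    (∏ j : Fin s, rho b α (γ1 j) (x j)) ≤ rho b α (γ1 i) (x i) := by
  rw [← Finset.mul_prod_erase Finset.univ _ (Finset.mem_univ i)]
  have h1 : (∏ j ∈ Finset.univ.erase i, rho b α (γ1 j) (x j)) ≤ 1 :=
    Finset.prod_le_one (fun j _ => (rho_pos hb (hγ1 j).1 _).le)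
      (fun j _ => rho_le_one hb hα (hγ1 j).1 (hγ1 j).2 _)
  have h2 := rho_pos (α := α) hb (hγ1 i).1 (x i)
  nlinarith

lemma prod_le_rK (hβ : 0 ≤ β) (hγ2 : ∀ j, 0 < γ2 j ∧ γ2 j ≤ 1)
    {t : ℕ} (y : Fin t → ℤ) (i : Fin t) :
    (∏ j : Fin t, rK β (γ2 j) (y j)) ≤ rK β (γ2 i) (y i) := by
  rw [← Finset.mul_prod_erase Finset.univ _ (Finset.mem_univ i)]
  have h1 : (∏ j ∈ Finset.univ.erase i, rK β (γ2 j) (y j)) ≤ 1 :=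
    Finset.prod_le_one (fun j _ => (rK_pos (hγ2 j).1 _).le)
      (fun j _ => rK_le_one hβ (hγ2 j).1 (hγ2 j).2 _)
  have h2 := rK_pos (β := β) (hγ2 i).1 (y i)
  nlinarith

lemma box_subset (hb : 2 ≤ b) (hα : 1 ≤ α) (hβ : 1 ≤ β)
    (hγ1 : ∀ j, 0 < γ1 j ∧ γ1 j ≤ 1) (hγ2 : ∀ j, 0 < γ2 j ∧ γ2 j ≤ 1)
    {ε : ℝ} (hε : 0 < ε) {s t : ℕ} {L : ℕ} (hL : (ε⁻¹) ^ 2 < 2 ^ L) :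
    {p : (Fin s → ℕ) × (Fin t → ℤ) |
      (∏ j : Fin s, rho b α (γ1 j) (p.1 j)) * (∏ j : Fin t, rK β (γ2 j) (p.2 j)) > ε ^ 2} ⊆
    ↑((Fintype.piFinset fun _ : Fin s => Finset.range (b ^ (L + 1))) ×ˢ
      (Fintype.piFinset fun _ : Fin t => Finset.Icc (-(2 ^ L : ℤ)) (2 ^ L))) := by
  intro p hp
  simp only [Set.mem_setOf_eq, gt_iff_lt] at hp
  have hA := prod_rho_pos (α := α) hb hγ1 p.1
  have hB := prod_rK_pos (β := β) hγ2 p.2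
  have hAle := prod_rho_le_one (α := α) hb (by linarith) hγ1 p.1
  have hBle := prod_rK_le_one (by linarith : (0:ℝ) ≤ β) hγ2 p.2
  simp only [Finset.coe_product, Set.mem_prod, Finset.mem_coe, Fintype.mem_piFinset]
  constructor
  · intro i
    rw [Finset.mem_range]
    rcases eq_or_ne (p.1 i) 0 with h0 | h0
    · rw [h0]; exact Nat.pow_pos (by omega)
    · have hfac : ε ^ 2 < rho b α (γ1 i) (p.1 i) := by
        calc ε ^ 2 < _ := hp
        _ ≤ (∏ j : Fin s, rho b α (γ1 j) (p.1 j)) := by nlinarith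
        _ ≤ _ := prod_le_rho hb (by linarith) hγ1 p.1 i
      set m := Nat.log b (p.1 i) with hm
      have hrho : rho b α (γ1 i) (p.1 i) = γ1 i * (b:ℝ) ^ (-(α * (m:ℝ))) := by
        rw [rho, if_neg h0]
      have step : (2:ℝ) ^ m ≤ (b:ℝ) ^ (α * (m:ℝ)) := by
        calc (2:ℝ) ^ m ≤ (b:ℝ) ^ m :=
              pow_le_pow_left₀ (by norm_num) (by exact_mod_cast hb) m
        _ = (b:ℝ) ^ ((m:ℕ):ℝ) := (Real.rpow_natCast _ _).symm
        _ ≤ (b:ℝ) ^ (α * (m:ℝ)) := by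
              refine Real.rpow_le_rpow_of_exponent_le (bR_one hb) ?_
              nlinarith [Nat.cast_nonneg (α := ℝ) m]
      have hneg : (b:ℝ) ^ (-(α * (m:ℝ))) = ((b:ℝ) ^ (α * (m:ℝ)))⁻¹ := by
        rw [Real.rpow_neg (bR_pos hb).le]
      have h2m : (0:ℝ) < 2 ^ m := by positivity
      have hbpow : (0:ℝ) < (b:ℝ) ^ (α * (m:ℝ)) := Real.rpow_pos_of_pos (bR_pos hb) _
      have hεfac : ε ^ 2 < ((2:ℝ) ^ m)⁻¹ := by
        have h5 : ε ^ 2 < ((b:ℝ) ^ (α * (m:ℝ)))⁻¹ := by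
          rw [hrho, hneg] at hfac
          nlinarith [(hγ1 i).1, (hγ1 i).2, inv_pos.mpr hbpow]
        calc ε ^ 2 < ((b:ℝ) ^ (α * (m:ℝ)))⁻¹ := h5
        _ ≤ ((2:ℝ) ^ m)⁻¹ := by
          apply inv_anti₀ h2m step
      have key : (2:ℝ) ^ m < (ε⁻¹) ^ 2 := by
        have h3 : (0:ℝ) < ε ^ 2 := by positivity
        have h4 : (ε⁻¹) ^ 2 * ε ^ 2 = 1 := by field_simp
        have hlt : ε ^ 2 * 2 ^ m < 1 := by
          have h6 := mul_lt_mul_of_pos_right hεfac h2m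
          rwa [inv_mul_cancel₀ (ne_of_gt h2m)] at h6
        nlinarith
      have hmL : m < L := by
        have h7 : (2:ℝ) ^ m < (2:ℝ) ^ L := lt_trans key hL
        exact_mod_cast (pow_lt_pow_iff_right₀ (by norm_num : (1:ℝ) < 2)).mp h7
      calc p.1 i < b ^ (m + 1) := Nat.lt_pow_succ_log_self (by omega) _
      _ ≤ b ^ (L + 1) := Nat.pow_le_pow_right (by omega) (by omega)
  · intro i
    rw [Finset.mem_Icc, ← abs_le]
    rcases eq_or_ne (p.2 i) 0 with h0 | h0
    · rw [h0]; simp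
    · have hfac : ε ^ 2 < rK β (γ2 i) (p.2 i) := by
        calc ε ^ 2 < _ := hp
        _ ≤ (∏ j : Fin t, rK β (γ2 j) (p.2 j)) := by nlinarith
        _ ≤ _ := prod_le_rK (by linarith) hγ2 p.2 i
      have habs : (1:ℝ) ≤ |((p.2 i : ℤ) : ℝ)| := abs_int_one_le h0
      have hrK : rK β (γ2 i) (p.2 i) = γ2 i * |((p.2 i : ℤ) : ℝ)| ^ (-β) := by
        rw [rK, if_neg h0]
      have step : |((p.2 i : ℤ) : ℝ)| ≤ |((p.2 i : ℤ) : ℝ)| ^ β := by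
        calc |((p.2 i : ℤ) : ℝ)| = |((p.2 i : ℤ) : ℝ)| ^ (1:ℝ) := (Real.rpow_one _).symm
        _ ≤ _ := Real.rpow_le_rpow_of_exponent_le habs hβ
      have hpos : (0:ℝ) < |((p.2 i : ℤ) : ℝ)| := lt_of_lt_of_le one_pos habs
      have hβpow : (0:ℝ) < |((p.2 i : ℤ) : ℝ)| ^ β := Real.rpow_pos_of_pos hpos _
      have hεfac : ε ^ 2 < (|((p.2 i : ℤ) : ℝ)|)⁻¹ := by
        have h1 : ε ^ 2 < (|((p.2 i : ℤ) : ℝ)| ^ β)⁻¹ := by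
          rw [hrK, Real.rpow_neg (abs_nonneg _)] at hfac
          nlinarith [(hγ2 i).1, (hγ2 i).2, inv_pos.mpr hβpow]
        calc ε ^ 2 < _ := h1
        _ ≤ _ := inv_anti₀ hpos step
      have key : |((p.2 i : ℤ) : ℝ)| < (ε⁻¹) ^ 2 := by
        have h3 : (0:ℝ) < ε ^ 2 := by positivity
        have h4 : (ε⁻¹) ^ 2 * ε ^ 2 = 1 := by field_simp
        have hlt : ε ^ 2 * |((p.2 i : ℤ) : ℝ)| < 1 := by
          have h6 := mul_lt_mul_of_pos_right hεfac hpos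
          rwa [inv_mul_cancel₀ (ne_of_gt hpos)] at h6
        nlinarith
      have h8 : |((p.2 i : ℤ) : ℝ)| < (2:ℝ) ^ L := lt_trans key hL
      rw [← Int.cast_abs] at h8
      exact_mod_cast h8.le

/-- The zeta-type constant for the Walsh part. -/
noncomputable def cWalsh (b : ℕ) (α τ : ℝ) : ℝ :=
  (b:ℝ) ^ (α * τ) * ∑' k : ℕ, (k:ℝ) ^ (-(α * τ))

/-- The zeta-type constant for the Korobov part. -/
noncomputable def cKor (β τ : ℝ) : ℝ :=
  ∑' l : ℤ, |(l:ℝ)| ^ (-(β * τ))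

lemma cWalsh_nonneg {b : ℕ} {α τ : ℝ} : 0 ≤ cWalsh b α τ := by
  unfold cWalsh
  have h1 : (0:ℝ) ≤ ∑' k : ℕ, (k:ℝ) ^ (-(α * τ)) :=
    tsum_nonneg (fun k => Real.rpow_nonneg (Nat.cast_nonneg k) _)
  have h2 : (0:ℝ) ≤ (b:ℝ) ^ (α * τ) := Real.rpow_nonneg (Nat.cast_nonneg b) _
  positivity

lemma cKor_nonneg {β τ : ℝ} : 0 ≤ cKor β τ :=
  tsum_nonneg (fun l => Real.rpow_nonneg (abs_nonneg _) _)

lemma sum_rho_rpow_le {b : ℕ} {α γ τ : ℝ} (hb : 2 ≤ b) (hγ0 : 0 < γ) (hγ1 : γ ≤ 1)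
    (hτ : 0 < τ) (hατ : 1 < α * τ) (F : Finset ℕ) :
    ∑ k ∈ F, (rho b α γ k) ^ τ ≤ 1 + γ ^ τ * cWalsh b α τ := by
  have hbpos := bR_pos hb
  have hsummable : Summable (fun k : ℕ => (k:ℝ) ^ (-(α * τ))) :=
    Real.summable_nat_rpow.mpr (by linarith)
  have hkey : ∀ k ∈ F.erase 0,
      (rho b α γ k) ^ τ ≤ γ ^ τ * ((b:ℝ) ^ (α * τ) * (k:ℝ) ^ (-(α * τ))) := by
    intro k hk
    have hk0 : k ≠ 0 := Finset.ne_of_mem_erase hk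
    have hk1 : (1:ℝ) ≤ (k:ℝ) := by exact_mod_cast Nat.one_le_iff_ne_zero.mpr hk0
    set m := Nat.log b k with hm
    have hrho : rho b α γ k = γ * (b:ℝ) ^ (-(α * (m:ℝ))) := by rw [rho, if_neg hk0]
    rw [hrho, Real.mul_rpow hγ0.le (Real.rpow_pos_of_pos hbpos _).le,
      ← Real.rpow_mul hbpos.le]
    refine mul_le_mul_of_nonneg_left ?_ (Real.rpow_nonneg hγ0.le _)
    -- b ^ (-(α m) τ) ≤ b^(ατ) * k^(-(ατ))
    have hklt : (k:ℝ) ≤ (b:ℝ) ^ ((m:ℝ) + 1) := by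
      have h1 : k < b ^ (m + 1) := Nat.lt_pow_succ_log_self (by omega) k
      have h2 : (k:ℝ) ≤ ((b ^ (m+1) : ℕ) : ℝ) := by exact_mod_cast h1.le
      calc (k:ℝ) ≤ ((b ^ (m+1) : ℕ) : ℝ) := h2
      _ = (b:ℝ) ^ ((m:ℝ) + 1) := by
          push_cast
          rw [← Real.rpow_natCast (b:ℝ) (m+1)]
          push_cast
          ring_nf
    have hkpow : (k:ℝ) ^ (α * τ) ≤ (b:ℝ) ^ (((m:ℝ) + 1) * (α * τ)) := by
      calc (k:ℝ) ^ (α * τ) ≤ ((b:ℝ) ^ ((m:ℝ) + 1)) ^ (α * τ) :=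
            Real.rpow_le_rpow (by linarith) hklt (by positivity)
      _ = (b:ℝ) ^ (((m:ℝ) + 1) * (α * τ)) := by rw [← Real.rpow_mul hbpos.le]
    have hkpow_pos : (0:ℝ) < (k:ℝ) ^ (α * τ) := Real.rpow_pos_of_pos (by linarith) _
    have hinv : (b:ℝ) ^ (-(((m:ℝ) + 1) * (α * τ))) ≤ (k:ℝ) ^ (-(α * τ)) := by
      rw [Real.rpow_neg hbpos.le, Real.rpow_neg (by linarith : (0:ℝ) ≤ (k:ℝ))]
      exact inv_anti₀ hkpow_pos hkpow
    calc (b:ℝ) ^ (-(α * (m:ℝ)) * τ)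
        = (b:ℝ) ^ (α * τ) * (b:ℝ) ^ (-(((m:ℝ) + 1) * (α * τ))) := by
          rw [← Real.rpow_add hbpos]; ring_nf
    _ ≤ (b:ℝ) ^ (α * τ) * (k:ℝ) ^ (-(α * τ)) :=
          mul_le_mul_of_nonneg_left hinv (Real.rpow_nonneg hbpos.le _)
  calc ∑ k ∈ F, (rho b α γ k) ^ τ
      ≤ ∑ k ∈ insert 0 F, (rho b α γ k) ^ τ := by
        refine Finset.sum_le_sum_of_subset_of_nonneg (Finset.subset_insert 0 F) ?_
        intro k _ _
        exact Real.rpow_nonneg (rho_pos hb hγ0 k).le τ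
  _ = (rho b α γ 0) ^ τ + ∑ k ∈ (insert 0 F).erase 0, (rho b α γ k) ^ τ :=
        (Finset.add_sum_erase _ _ (Finset.mem_insert_self 0 F)).symm
  _ = 1 + ∑ k ∈ F.erase 0, (rho b α γ k) ^ τ := by
        rw [Finset.erase_insert_eq_erase]
        congr 1
        rw [rho, if_pos rfl, Real.one_rpow]
  _ ≤ 1 + ∑ k ∈ F.erase 0, γ ^ τ * ((b:ℝ) ^ (α * τ) * (k:ℝ) ^ (-(α * τ))) := by
        gcongr with k hk
        · exact hkey k hk
  _ = 1 + γ ^ τ * ((b:ℝ) ^ (α * τ) * ∑ k ∈ F.erase 0, (k:ℝ) ^ (-(α * τ))) := by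
        rw [Finset.mul_sum, Finset.mul_sum]
  _ ≤ 1 + γ ^ τ * cWalsh b α τ := by
        unfold cWalsh
        have hst := Summable.sum_le_tsum (f := fun k : ℕ => (k:ℝ) ^ (-(α * τ))) (F.erase 0)
          (fun k _ => Real.rpow_nonneg (Nat.cast_nonneg k) _) hsummable
        gcongr <;> first
          | exact hst
          | exact Real.rpow_nonneg hγ0.le τ
          | exact Real.rpow_nonneg hbpos.le _

lemma sum_rK_rpow_le {β γ τ : ℝ} (hγ0 : 0 < γ) (hγ1 : γ ≤ 1)
    (hτ : 0 < τ) (hβτ : 1 < β * τ) (G : Finset ℤ) :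
    ∑ l ∈ G, (rK β γ l) ^ τ ≤ 1 + γ ^ τ * cKor β τ := by
  have hsummable : Summable (fun l : ℤ => |(l:ℝ)| ^ (-(β * τ))) :=
    Real.summable_abs_int_rpow hβτ
  have hkey : ∀ l ∈ G.erase 0, (rK β γ l) ^ τ ≤ γ ^ τ * |(l:ℝ)| ^ (-(β * τ)) := by
    intro l hl
    have hl0 : l ≠ 0 := Finset.ne_of_mem_erase hl
    have habs := abs_int_one_le hl0
    have hrK : rK β γ l = γ * |(l:ℝ)| ^ (-β) := by rw [rK, if_neg hl0]
    rw [hrK, Real.mul_rpow hγ0.le (Real.rpow_nonneg (abs_nonneg _) _),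
      ← Real.rpow_mul (abs_nonneg _)]
    have : -β * τ = -(β * τ) := by ring
    rw [this]
  calc ∑ l ∈ G, (rK β γ l) ^ τ
      ≤ ∑ l ∈ insert 0 G, (rK β γ l) ^ τ := by
        refine Finset.sum_le_sum_of_subset_of_nonneg (Finset.subset_insert 0 G) ?_
        intro l _ _
        exact Real.rpow_nonneg (rK_pos hγ0 l).le τ
  _ = (rK β γ 0) ^ τ + ∑ l ∈ (insert 0 G).erase 0, (rK β γ l) ^ τ :=
        (Finset.add_sum_erase _ _ (Finset.mem_insert_self 0 G)).symm
  _ = 1 + ∑ l ∈ G.erase 0, (rK β γ l) ^ τ := by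
        rw [Finset.erase_insert_eq_erase]
        congr 1
        rw [rK, if_pos rfl, Real.one_rpow]
  _ ≤ 1 + ∑ l ∈ G.erase 0, γ ^ τ * |(l:ℝ)| ^ (-(β * τ)) := by
        gcongr with l hl
        · exact hkey l hl
  _ = 1 + γ ^ τ * ∑ l ∈ G.erase 0, |(l:ℝ)| ^ (-(β * τ)) := by rw [Finset.mul_sum]
  _ ≤ 1 + γ ^ τ * cKor β τ := by
        unfold cKor
        have hst := Summable.sum_le_tsum (f := fun l : ℤ => |(l:ℝ)| ^ (-(β * τ))) (G.erase 0)
          (fun l _ => Real.rpow_nonneg (abs_nonneg _) _) hsummable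
        gcongr <;> first
          | exact hst
          | exact Real.rpow_nonneg hγ0.le τ

lemma Ncount_bound {b : ℕ} {α β : ℝ} {γ1 γ2 : ℕ → ℝ} (hb : 2 ≤ b) (hα : 1 < α) (hβ : 1 < β)
    (hγ1 : ∀ j, 0 < γ1 j ∧ γ1 j ≤ 1) (hγ2 : ∀ j, 0 < γ2 j ∧ γ2 j ≤ 1)
    {κ : ℝ} (hκ : 0 < κ) (hs1 : Summable fun j => γ1 j ^ κ)
    (hs2 : Summable fun j => γ2 j ^ κ) :
    ∃ C τ : ℝ, 0 ≤ C ∧ 0 ≤ τ ∧ ∀ ε : ℝ, 0 < ε → ε < 1 → ∀ s t : ℕ,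
      (Ncount b α β γ1 γ2 ε s t : ℝ) ≤ C * ε ^ (-τ) := by
  set τ0 : ℝ := κ + 2 with hτ0def
  have hτ0 : 0 < τ0 := by positivity
  have hατ0 : 1 < α * τ0 := by nlinarith
  have hβτ0 : 1 < β * τ0 := by nlinarith
  have hS1 : Summable fun j => γ1 j ^ τ0 :=
    hs1.of_nonneg_of_le (fun j => Real.rpow_nonneg (hγ1 j).1.le _)
      (fun j => Real.rpow_le_rpow_of_exponent_ge (hγ1 j).1 (hγ1 j).2 (by linarith))
  have hS2 : Summable fun j => γ2 j ^ τ0 :=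
    hs2.of_nonneg_of_le (fun j => Real.rpow_nonneg (hγ2 j).1.le _)
      (fun j => Real.rpow_le_rpow_of_exponent_ge (hγ2 j).1 (hγ2 j).2 (by linarith))
  set T1 : ℝ := ∑' j, γ1 j ^ τ0 with hT1
  set T2 : ℝ := ∑' j, γ2 j ^ τ0 with hT2
  refine ⟨Real.exp (cWalsh b α τ0 * T1 + cKor β τ0 * T2), 2 * τ0, (Real.exp_pos _).le,
    by positivity, ?_⟩
  intro ε hε0 hε1 s t
  obtain ⟨L, hL⟩ := pow_unbounded_of_one_lt ((ε⁻¹) ^ 2) (one_lt_two (α := ℝ))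
  set S := {p : (Fin s → ℕ) × (Fin t → ℤ) |
      (∏ j : Fin s, rho b α (γ1 j) (p.1 j)) * (∏ j : Fin t, rK β (γ2 j) (p.2 j)) > ε ^ 2}
    with hS
  set F1 := Fintype.piFinset fun _ : Fin s => Finset.range (b ^ (L + 1)) with hF1
  set F2 := Fintype.piFinset fun _ : Fin t => Finset.Icc (-(2 ^ L : ℤ)) (2 ^ L) with hF2
  have hsub : S ⊆ ↑(F1 ×ˢ F2) := box_subset hb hα.le hβ.le hγ1 hγ2 hε0 hL
  have hfin : S.Finite := Set.Finite.subset (Finset.finite_toSet _) hsub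
  have hNc : Ncount b α β γ1 γ2 ε s t = hfin.toFinset.card := by
    rw [Ncount, ← hS, Set.ncard_eq_toFinset_card S hfin]
  set q : ℝ := (ε ^ 2) ^ τ0 with hq
  have hqpos : 0 < q := Real.rpow_pos_of_pos (by positivity) _
  have h1 : (hfin.toFinset.card : ℝ) * q ≤
      ∑ p ∈ hfin.toFinset,
        ((∏ j : Fin s, rho b α (γ1 j) (p.1 j)) * (∏ j : Fin t, rK β (γ2 j) (p.2 j))) ^ τ0 := by
    have := Finset.card_nsmul_le_sum hfin.toFinset
      (fun p => ((∏ j : Fin s, rho b α (γ1 j) (p.1 j)) *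
        (∏ j : Fin t, rK β (γ2 j) (p.2 j))) ^ τ0) q ?_
    · simpa [nsmul_eq_mul] using this
    · intro p hp
      rw [Set.Finite.mem_toFinset] at hp
      exact Real.rpow_le_rpow (by positivity) (le_of_lt hp) hτ0.le
  have h2 : ∑ p ∈ hfin.toFinset,
        ((∏ j : Fin s, rho b α (γ1 j) (p.1 j)) * (∏ j : Fin t, rK β (γ2 j) (p.2 j))) ^ τ0 ≤
      ∑ p ∈ F1 ×ˢ F2,
        ((∏ j : Fin s, rho b α (γ1 j) (p.1 j)) * (∏ j : Fin t, rK β (γ2 j) (p.2 j))) ^ τ0 := by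
    refine Finset.sum_le_sum_of_subset_of_nonneg ?_ ?_
    · intro p hp
      rw [Set.Finite.mem_toFinset] at hp
      exact Finset.mem_coe.mp (hsub hp)
    · intro p _ _
      have hA : 0 < ∏ j : Fin s, rho b α (γ1 j) (p.1 j) :=
        Finset.prod_pos fun j _ => rho_pos hb (hγ1 j).1 _
      have hB : 0 < ∏ j : Fin t, rK β (γ2 j) (p.2 j) :=
        Finset.prod_pos fun j _ => rK_pos (hγ2 j).1 _
      positivity
  have h3 : ∑ p ∈ F1 ×ˢ F2,
        ((∏ j : Fin s, rho b α (γ1 j) (p.1 j)) * (∏ j : Fin t, rK β (γ2 j) (p.2 j))) ^ τ0 =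
      (∑ x ∈ F1, ∏ j : Fin s, (rho b α (γ1 j) (x j)) ^ τ0) *
      (∑ y ∈ F2, ∏ j : Fin t, (rK β (γ2 j) (y j)) ^ τ0) := by
    rw [Finset.sum_mul_sum, Finset.sum_product]
    refine Finset.sum_congr rfl (fun x _ => Finset.sum_congr rfl (fun y _ => ?_))
    show ((∏ j : Fin s, rho b α (γ1 j) (x j)) * ∏ j : Fin t, rK β (γ2 j) (y j)) ^ τ0 = _
    have hx : (0:ℝ) ≤ ∏ j : Fin s, rho b α (γ1 j) (x j) :=
      Finset.prod_nonneg fun j _ => (rho_pos hb (hγ1 j).1 _).le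
    have hy : (0:ℝ) ≤ ∏ j : Fin t, rK β (γ2 j) (y j) :=
      Finset.prod_nonneg fun j _ => (rK_pos (hγ2 j).1 _).le
    rw [Real.mul_rpow hx hy,
      ← Real.finset_prod_rpow Finset.univ (fun j : Fin s => rho b α (γ1 j) (x j))
        (fun j _ => (rho_pos hb (hγ1 j).1 _).le) τ0,
      ← Real.finset_prod_rpow Finset.univ (fun j : Fin t => rK β (γ2 j) (y j))
        (fun j _ => (rK_pos (hγ2 j).1 _).le) τ0]
  have h4 : (∑ x ∈ F1, ∏ j : Fin s, (rho b α (γ1 j) (x j)) ^ τ0) =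
      ∏ j : Fin s, ∑ k ∈ Finset.range (b ^ (L + 1)), (rho b α (γ1 j) k) ^ τ0 := by
    rw [hF1, Finset.prod_univ_sum]
  have h5 : (∑ y ∈ F2, ∏ j : Fin t, (rK β (γ2 j) (y j)) ^ τ0) =
      ∏ j : Fin t, ∑ l ∈ Finset.Icc (-(2 ^ L : ℤ)) (2 ^ L), (rK β (γ2 j) l) ^ τ0 := by
    rw [hF2, Finset.prod_univ_sum]
  have h6 : (∏ j : Fin s, ∑ k ∈ Finset.range (b ^ (L + 1)), (rho b α (γ1 j) k) ^ τ0) ≤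
      Real.exp (cWalsh b α τ0 * T1) := by
    calc (∏ j : Fin s, ∑ k ∈ Finset.range (b ^ (L + 1)), (rho b α (γ1 j) k) ^ τ0)
        ≤ ∏ j : Fin s, Real.exp (cWalsh b α τ0 * γ1 (j : ℕ) ^ τ0) := by
          refine Finset.prod_le_prod (fun j _ => Finset.sum_nonneg fun k _ =>
            Real.rpow_nonneg (rho_pos hb (hγ1 j).1 k).le _) (fun j _ => ?_)
          calc ∑ k ∈ Finset.range (b ^ (L + 1)), (rho b α (γ1 j) k) ^ τ0
              ≤ 1 + γ1 (j : ℕ) ^ τ0 * cWalsh b α τ0 :=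
                sum_rho_rpow_le hb (hγ1 j).1 (hγ1 j).2 hτ0 hατ0 _
          _ ≤ Real.exp (cWalsh b α τ0 * γ1 (j : ℕ) ^ τ0) := by
                have := Real.add_one_le_exp (cWalsh b α τ0 * γ1 (j : ℕ) ^ τ0)
                linarith [this]
    _ = Real.exp (∑ j : Fin s, cWalsh b α τ0 * γ1 (j : ℕ) ^ τ0) := (Real.exp_sum _ _).symm
    _ ≤ Real.exp (cWalsh b α τ0 * T1) := by
          rw [Real.exp_le_exp, ← Finset.mul_sum]
          refine mul_le_mul_of_nonneg_left ?_ cWalsh_nonneg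
          rw [Fin.sum_univ_eq_sum_range (fun j => γ1 j ^ τ0) s]
          exact Summable.sum_le_tsum _ (fun j _ => Real.rpow_nonneg (hγ1 j).1.le _) hS1
  have h7 : (∏ j : Fin t, ∑ l ∈ Finset.Icc (-(2 ^ L : ℤ)) (2 ^ L), (rK β (γ2 j) l) ^ τ0) ≤
      Real.exp (cKor β τ0 * T2) := by
    calc (∏ j : Fin t, ∑ l ∈ Finset.Icc (-(2 ^ L : ℤ)) (2 ^ L), (rK β (γ2 j) l) ^ τ0)
        ≤ ∏ j : Fin t, Real.exp (cKor β τ0 * γ2 (j : ℕ) ^ τ0) := by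
          refine Finset.prod_le_prod (fun j _ => Finset.sum_nonneg fun l _ =>
            Real.rpow_nonneg (rK_pos (hγ2 j).1 l).le _) (fun j _ => ?_)
          calc ∑ l ∈ Finset.Icc (-(2 ^ L : ℤ)) (2 ^ L), (rK β (γ2 j) l) ^ τ0
              ≤ 1 + γ2 (j : ℕ) ^ τ0 * cKor β τ0 :=
                sum_rK_rpow_le (hγ2 j).1 (hγ2 j).2 hτ0 hβτ0 _
          _ ≤ Real.exp (cKor β τ0 * γ2 (j : ℕ) ^ τ0) := by
                have := Real.add_one_le_exp (cKor β τ0 * γ2 (j : ℕ) ^ τ0)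
                linarith [this]
    _ = Real.exp (∑ j : Fin t, cKor β τ0 * γ2 (j : ℕ) ^ τ0) := (Real.exp_sum _ _).symm
    _ ≤ Real.exp (cKor β τ0 * T2) := by
          rw [Real.exp_le_exp, ← Finset.mul_sum]
          refine mul_le_mul_of_nonneg_left ?_ cKor_nonneg
          rw [Fin.sum_univ_eq_sum_range (fun j => γ2 j ^ τ0) t]
          exact Summable.sum_le_tsum _ (fun j _ => Real.rpow_nonneg (hγ2 j).1.le _) hS2
  have hfinal : (hfin.toFinset.card : ℝ) * q ≤
      Real.exp (cWalsh b α τ0 * T1 + cKor β τ0 * T2) := by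
    rw [Real.exp_add]
    calc (hfin.toFinset.card : ℝ) * q ≤ _ := h1
    _ ≤ _ := h2
    _ = _ := h3
    _ = (∏ j : Fin s, ∑ k ∈ Finset.range (b ^ (L + 1)), (rho b α (γ1 j) k) ^ τ0) *
        (∏ j : Fin t, ∑ l ∈ Finset.Icc (-(2 ^ L : ℤ)) (2 ^ L), (rK β (γ2 j) l) ^ τ0) := by
          rw [h4, h5]
    _ ≤ Real.exp (cWalsh b α τ0 * T1) * Real.exp (cKor β τ0 * T2) := by
          have hpos : (0:ℝ) ≤ ∏ j : Fin t, ∑ l ∈ Finset.Icc (-(2 ^ L : ℤ)) (2 ^ L),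
              (rK β (γ2 j) l) ^ τ0 :=
            Finset.prod_nonneg fun j _ => Finset.sum_nonneg fun l _ =>
              Real.rpow_nonneg (rK_pos (hγ2 j).1 l).le _
          exact mul_le_mul h6 h7 hpos (Real.exp_pos _).le
  have hqeq : ε ^ (-(2 * τ0)) = q⁻¹ := by
    rw [Real.rpow_neg hε0.le, hq]
    congr 1
    rw [Real.rpow_mul hε0.le, Real.rpow_two]
  rw [hNc, hqeq]
  rw [← le_div_iff₀ hqpos] at hfinal
  calc (hfin.toFinset.card : ℝ) ≤ _ / q := hfinal
  _ = _ * q⁻¹ := div_eq_mul_inv _ _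

section
variable {b : ℕ} {α β : ℝ} {γ1 γ2 : ℕ → ℝ}

lemma card_filter_le_Ncount1 (hb : 2 ≤ b) (hα : 1 ≤ α) (hβ : 1 ≤ β)
    (hγ1 : ∀ j, 0 < γ1 j ∧ γ1 j ≤ 1) (hγ2 : ∀ j, 0 < γ2 j ∧ γ2 j ≤ 1)
    {ε : ℝ} (hε : 0 < ε) (s : ℕ) :
    ((Finset.range s).filter (fun j => ε ^ 2 < γ1 j)).card ≤ Ncount b α β γ1 γ2 ε s 0 := by
  obtain ⟨L, hL⟩ := pow_unbounded_of_one_lt ((ε⁻¹) ^ 2) (one_lt_two (α := ℝ))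
  set S := {p : (Fin s → ℕ) × (Fin 0 → ℤ) |
      (∏ j : Fin s, rho b α (γ1 j) (p.1 j)) * (∏ j : Fin 0, rK β (γ2 j) (p.2 j)) > ε ^ 2}
    with hS
  have hsub := box_subset (s := s) (t := 0) hb hα hβ hγ1 hγ2 hε hL
  have hfin : S.Finite := Set.Finite.subset (Finset.finite_toSet _) hsub
  have hNc : Ncount b α β γ1 γ2 ε s 0 = hfin.toFinset.card := by
    rw [Ncount, Set.ncard_eq_toFinset_card S hfin]
  rw [hNc]
  set f : ℕ → (Fin s → ℕ) × (Fin 0 → ℤ) :=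
    fun j => (fun i => if (i : ℕ) = j then 1 else 0, fun _ => 0) with hf
  refine Finset.card_le_card_of_injOn f ?_ ?_
  · intro j hj
    rw [Finset.mem_coe, Finset.mem_filter, Finset.mem_range] at hj
    obtain ⟨hjs, hjε⟩ := hj
    rw [Finset.mem_coe, Set.Finite.mem_toFinset]
    show ε ^ 2 < _
    have hprod : (∏ i : Fin s, rho b α (γ1 i) ((f j).1 i)) = γ1 j := by
      rw [hf]
      have h1 : ∀ i : Fin s, i ≠ ⟨j, hjs⟩ →
          rho b α (γ1 i) (if (i : ℕ) = j then 1 else 0) = 1 := by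
        intro i hi
        have : (i : ℕ) ≠ j := fun h => hi (Fin.ext h)
        rw [if_neg this, rho, if_pos rfl]
      have h2 : rho b α (γ1 (⟨j, hjs⟩ : Fin s)) (if ((⟨j, hjs⟩ : Fin s) : ℕ) = j then 1 else 0)
          = γ1 j := by
        rw [if_pos rfl, rho, if_neg one_ne_zero]
        simp [Nat.log_one_right]
      calc (∏ i : Fin s, rho b α (γ1 i) (if (i : ℕ) = j then 1 else 0))
          = rho b α (γ1 (⟨j, hjs⟩ : Fin s)) (if ((⟨j, hjs⟩ : Fin s) : ℕ) = j then 1 else 0) :=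
            Finset.prod_eq_single _ (fun i _ hi => h1 i hi) (fun h => absurd (Finset.mem_univ _) h)
      _ = γ1 j := h2
    have hprod2 : (∏ i : Fin 0, rK β (γ2 i) ((f j).2 i)) = 1 := by simp
    rw [hprod, hprod2, mul_one]
    exact hjε
  · intro j hj j' hj' hjj
    simp only [Finset.coe_filter, Set.mem_setOf_eq, Finset.mem_range] at hj hj'
    have h1 := congrFun (congrArg Prod.fst hjj) ⟨j, hj.1⟩
    simp only [hf] at h1
    by_contra hne
    simp [hne] at h1

lemma card_filter_le_Ncount2 (hb : 2 ≤ b) (hα : 1 ≤ α) (hβ : 1 ≤ β)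
    (hγ1 : ∀ j, 0 < γ1 j ∧ γ1 j ≤ 1) (hγ2 : ∀ j, 0 < γ2 j ∧ γ2 j ≤ 1)
    {ε : ℝ} (hε : 0 < ε) (t : ℕ) :
    ((Finset.range t).filter (fun j => ε ^ 2 < γ2 j)).card ≤ Ncount b α β γ1 γ2 ε 0 t := by
  obtain ⟨L, hL⟩ := pow_unbounded_of_one_lt ((ε⁻¹) ^ 2) (one_lt_two (α := ℝ))
  set S := {p : (Fin 0 → ℕ) × (Fin t → ℤ) |
      (∏ j : Fin 0, rho b α (γ1 j) (p.1 j)) * (∏ j : Fin t, rK β (γ2 j) (p.2 j)) > ε ^ 2}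
    with hS
  have hsub := box_subset (s := 0) (t := t) hb hα hβ hγ1 hγ2 hε hL
  have hfin : S.Finite := Set.Finite.subset (Finset.finite_toSet _) hsub
  have hNc : Ncount b α β γ1 γ2 ε 0 t = hfin.toFinset.card := by
    rw [Ncount, Set.ncard_eq_toFinset_card S hfin]
  rw [hNc]
  set f : ℕ → (Fin 0 → ℕ) × (Fin t → ℤ) :=
    fun j => (fun _ => 0, fun i => if (i : ℕ) = j then 1 else 0) with hf
  refine Finset.card_le_card_of_injOn f ?_ ?_
  · intro j hj
    rw [Finset.mem_coe, Finset.mem_filter, Finset.mem_range] at hj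
    obtain ⟨hjs, hjε⟩ := hj
    rw [Finset.mem_coe, Set.Finite.mem_toFinset]
    show ε ^ 2 < _
    have hprod : (∏ i : Fin t, rK β (γ2 i) ((f j).2 i)) = γ2 j := by
      rw [hf]
      have h1 : ∀ i : Fin t, i ≠ ⟨j, hjs⟩ →
          rK β (γ2 i) (if (i : ℕ) = j then 1 else 0) = 1 := by
        intro i hi
        have : (i : ℕ) ≠ j := fun h => hi (Fin.ext h)
        rw [if_neg this, rK, if_pos rfl]
      have h2 : rK β (γ2 (⟨j, hjs⟩ : Fin t)) (if ((⟨j, hjs⟩ : Fin t) : ℕ) = j then 1 else 0)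
          = γ2 j := by
        rw [if_pos rfl, rK, if_neg one_ne_zero]
        simp
      calc (∏ i : Fin t, rK β (γ2 i) (if (i : ℕ) = j then 1 else 0))
          = rK β (γ2 (⟨j, hjs⟩ : Fin t)) (if ((⟨j, hjs⟩ : Fin t) : ℕ) = j then 1 else 0) :=
            Finset.prod_eq_single _ (fun i _ hi => h1 i hi) (fun h => absurd (Finset.mem_univ _) h)
      _ = γ2 j := h2
    have hprod2 : (∏ i : Fin 0, rho b α (γ1 i) ((f j).1 i)) = 1 := by simp
    rw [hprod, hprod2, one_mul]
    exact hjε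
  · intro j hj j' hj' hjj
    simp only [Finset.coe_filter, Set.mem_setOf_eq, Finset.mem_range] at hj hj'
    have h1 := congrFun (congrArg Prod.snd hjj) ⟨j, hj.1⟩
    simp only [hf] at h1
    by_contra hne
    simp [hne] at h1

end

lemma summable_of_counting {γ : ℕ → ℝ} (hγ : ∀ j, 0 < γ j ∧ γ j ≤ 1) {C τ : ℝ}
    (hC : 0 ≤ C) (hτ : 0 ≤ τ)
    (h : ∀ ε : ℝ, 0 < ε → ε < 1 → ∀ s : ℕ,
      (((Finset.range s).filter (fun j => ε ^ 2 < γ j)).card : ℝ) ≤ C * ε ^ (-τ)) :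
    Summable (fun j => γ j ^ (τ / 2 + 1)) := by
  set κ : ℝ := τ / 2 + 1 with hκdef
  have hκpos : 0 < κ := by positivity
  set g : ℕ → ℕ := fun j => Nat.log 2 ⌊(γ j)⁻¹⌋₊ with hg
  -- basic facts about the dyadic level
  have hx1 : ∀ j, (1:ℝ) ≤ (γ j)⁻¹ := fun j => (one_le_inv₀ (hγ j).1).mpr (hγ j).2
  have hfl : ∀ j, ⌊(γ j)⁻¹⌋₊ ≠ 0 := by
    intro j
    have := Nat.le_floor (α := ℝ) (n := 1) (by exact_mod_cast hx1 j)
    omega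
  have hupper : ∀ j, γ j ≤ ((2:ℝ) ^ (g j))⁻¹ := by
    intro j
    have h1 : (2:ℝ) ^ (g j) ≤ (γ j)⁻¹ := by
      calc (2:ℝ) ^ (g j) ≤ (⌊(γ j)⁻¹⌋₊ : ℝ) := by
            exact_mod_cast Nat.pow_log_le_self 2 (hfl j)
      _ ≤ (γ j)⁻¹ := Nat.floor_le (inv_nonneg.mpr (hγ j).1.le)
    have h2 := inv_anti₀ (by positivity : (0:ℝ) < (2:ℝ) ^ (g j)) h1
    rwa [inv_inv] at h2
  have hlower : ∀ j, ((2:ℝ) ^ (g j + 1))⁻¹ < γ j := by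
    intro j
    have h1 : (γ j)⁻¹ < (2:ℝ) ^ (g j + 1) := by
      calc (γ j)⁻¹ < (⌊(γ j)⁻¹⌋₊ : ℝ) + 1 := Nat.lt_floor_add_one _
      _ ≤ (2:ℝ) ^ (g j + 1) := by
            have h3 : ⌊(γ j)⁻¹⌋₊ + 1 ≤ 2 ^ (g j + 1) :=
              Nat.lt_pow_succ_log_self one_lt_two _
            exact_mod_cast h3
    have h2 := inv_strictAnti₀ (inv_pos.mpr (hγ j).1) h1
    rwa [inv_inv] at h2
  refine summable_of_sum_range_le (c := C * (2:ℝ) ^ (τ / 2) * 2)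
    (fun j => Real.rpow_nonneg (hγ j).1.le κ) ?_
  intro s
  set M : ℕ := ((Finset.range s).sup g) + 1 with hM
  have hmaps : ∀ j ∈ Finset.range s, g j ∈ Finset.range M := by
    intro j hj
    rw [Finset.mem_range, hM]
    exact Nat.lt_succ_of_le (Finset.le_sup hj)
  rw [← Finset.sum_fiberwise_of_maps_to hmaps (fun j => γ j ^ κ)]
  have hfiber : ∀ n, (∑ j ∈ (Finset.range s).filter (fun j => g j = n), γ j ^ κ) ≤
      C * (2:ℝ) ^ (τ / 2) * (2⁻¹ : ℝ) ^ n := by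
    intro n
    set εn : ℝ := (2:ℝ) ^ (-(((n:ℝ) + 1) / 2)) with hεn
    have hεn0 : 0 < εn := Real.rpow_pos_of_pos two_pos _
    have hεn1 : εn < 1 := by
      have hpos : (0:ℝ) < ((n:ℝ) + 1) / 2 := by positivity
      exact Real.rpow_lt_one_of_one_lt_of_neg one_lt_two (neg_lt_zero.mpr hpos)
    have hεnsq : εn ^ 2 = (2:ℝ) ^ (-((n:ℝ) + 1)) := by
      rw [hεn, ← Real.rpow_natCast ((2:ℝ) ^ (-(((n:ℝ) + 1) / 2))) 2,
        ← Real.rpow_mul (by norm_num : (0:ℝ) ≤ 2)]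
      norm_num
    have hεninv : (2:ℝ) ^ (-((n:ℝ) + 1)) = ((2:ℝ) ^ (n + 1 : ℕ))⁻¹ := by
      rw [Real.rpow_neg (by norm_num : (0:ℝ) ≤ 2)]
      congr 1
      rw [← Real.rpow_natCast (2:ℝ) (n+1)]
      push_cast
      ring_nf
    have hcard : (((Finset.range s).filter (fun j => g j = n)).card : ℝ) ≤ C * εn ^ (-τ) := by
      have hss : (Finset.range s).filter (fun j => g j = n) ⊆
          (Finset.range s).filter (fun j => εn ^ 2 < γ j) := by
        intro j hj
        rw [Finset.mem_filter] at hj ⊢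
        refine ⟨hj.1, ?_⟩
        rw [hεnsq, hεninv, ← hj.2]
        exact hlower j
      calc (((Finset.range s).filter (fun j => g j = n)).card : ℝ)
          ≤ (((Finset.range s).filter (fun j => εn ^ 2 < γ j)).card : ℝ) := by
            exact_mod_cast Finset.card_le_card hss
      _ ≤ C * εn ^ (-τ) := h εn hεn0 hεn1 s
    have hterm : ∀ j ∈ (Finset.range s).filter (fun j => g j = n),
        γ j ^ κ ≤ ((2:ℝ) ^ (-(n:ℝ))) ^ κ := by
      intro j hj
      rw [Finset.mem_filter] at hj
      refine Real.rpow_le_rpow (hγ j).1.le ?_ hκpos.le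
      calc γ j ≤ ((2:ℝ) ^ (g j))⁻¹ := hupper j
      _ = (2:ℝ) ^ (-(n:ℝ)) := by
          rw [hj.2, Real.rpow_neg (by norm_num : (0:ℝ) ≤ 2), Real.rpow_natCast]
    calc (∑ j ∈ (Finset.range s).filter (fun j => g j = n), γ j ^ κ)
        ≤ ((Finset.range s).filter (fun j => g j = n)).card • (((2:ℝ) ^ (-(n:ℝ))) ^ κ) :=
          Finset.sum_le_card_nsmul _ _ _ hterm
    _ = (((Finset.range s).filter (fun j => g j = n)).card : ℝ) * ((2:ℝ) ^ (-(n:ℝ))) ^ κ := by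
          rw [nsmul_eq_mul]
    _ ≤ (C * εn ^ (-τ)) * ((2:ℝ) ^ (-(n:ℝ))) ^ κ := by
          refine mul_le_mul_of_nonneg_right hcard ?_
          exact Real.rpow_nonneg (Real.rpow_nonneg (by norm_num) _) _
    _ = C * (2:ℝ) ^ (τ / 2) * (2⁻¹ : ℝ) ^ n := by
          rw [hεn, ← Real.rpow_mul (by norm_num : (0:ℝ) ≤ 2),
            ← Real.rpow_mul (by norm_num : (0:ℝ) ≤ 2), mul_assoc,
            ← Real.rpow_add two_pos]
          have hexp : -(((n:ℝ) + 1) / 2) * -τ + -(n:ℝ) * κ = τ / 2 + -(n:ℝ) := by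
            rw [hκdef]; ring
          rw [hexp, Real.rpow_add two_pos, ← mul_assoc]
          congr 1
          rw [Real.rpow_neg (by norm_num : (0:ℝ) ≤ 2), Real.rpow_natCast, inv_pow]
  calc (∑ n ∈ Finset.range M, ∑ j ∈ (Finset.range s).filter (fun j => g j = n), γ j ^ κ)
      ≤ ∑ n ∈ Finset.range M, C * (2:ℝ) ^ (τ / 2) * (2⁻¹ : ℝ) ^ n :=
        Finset.sum_le_sum (fun n _ => hfiber n)
  _ = C * (2:ℝ) ^ (τ / 2) * ∑ n ∈ Finset.range M, (2⁻¹ : ℝ) ^ n := by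
        rw [Finset.mul_sum]
  _ ≤ C * (2:ℝ) ^ (τ / 2) * 2 := by
        refine mul_le_mul_of_nonneg_left ?_ (by positivity)
        have hsum : (∑ n ∈ Finset.range M, (2⁻¹ : ℝ) ^ n) ≤ ∑' n : ℕ, (2⁻¹ : ℝ) ^ n :=
          Summable.sum_le_tsum _ (fun n _ => by positivity)
            (summable_geometric_of_lt_one (by norm_num) (by norm_num))
        rw [tsum_geometric_of_lt_one (by norm_num) (by norm_num)] at hsum
        have h22 : ((1:ℝ) - 2⁻¹)⁻¹ = 2 := by norm_num
        rwa [h22] at hsum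

theorem stmt_9 (b : ℕ) (hb : b.Prime) (α β : ℝ) (hα : 1 < α) (hβ : 1 < β)
    (γ1 γ2 : ℕ → ℝ) (hγ1 : ∀ j, 0 < γ1 j ∧ γ1 j ≤ 1) (hγ2 : ∀ j, 0 < γ2 j ∧ γ2 j ≤ 1) :
    (∃ C τ : ℝ, 0 ≤ C ∧ 0 ≤ τ ∧ ∀ ε : ℝ, 0 < ε → ε < 1 → ∀ s t : ℕ,
        (Ncount b α β γ1 γ2 ε s t : ℝ) ≤ C * ε ^ (-τ))
      ↔ sGamma γ1 γ2 < ⊤ := by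
  have hb2 : 2 ≤ b := hb.two_le
  constructor
  · rintro ⟨C, τ, hC, hτ, h⟩
    have hsum1 : Summable (fun j => γ1 j ^ (τ / 2 + 1)) := by
      refine summable_of_counting hγ1 hC hτ ?_
      intro ε hε0 hε1 s
      calc (((Finset.range s).filter (fun j => ε ^ 2 < γ1 j)).card : ℝ)
          ≤ (Ncount b α β γ1 γ2 ε s 0 : ℝ) := by
            exact_mod_cast card_filter_le_Ncount1 hb2 hα.le hβ.le hγ1 hγ2 hε0 s
      _ ≤ C * ε ^ (-τ) := h ε hε0 hε1 s 0
    have hsum2 : Summable (fun j => γ2 j ^ (τ / 2 + 1)) := by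
      refine summable_of_counting hγ2 hC hτ ?_
      intro ε hε0 hε1 t
      calc (((Finset.range t).filter (fun j => ε ^ 2 < γ2 j)).card : ℝ)
          ≤ (Ncount b α β γ1 γ2 ε 0 t : ℝ) := by
            exact_mod_cast card_filter_le_Ncount2 hb2 hα.le hβ.le hγ1 hγ2 hε0 t
      _ ≤ C * ε ^ (-τ) := h ε hε0 hε1 0 t
    rw [sGamma]
    have hmem : ENNReal.ofReal (τ / 2 + 1) ∈ {x : ENNReal | ∃ κ : ℝ, 0 < κ ∧
        x = ENNReal.ofReal κ ∧ Summable (fun j => γ1 j ^ κ) ∧ Summable (fun j => γ2 j ^ κ)} :=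
      ⟨τ / 2 + 1, by positivity, rfl, hsum1, hsum2⟩
    exact lt_of_le_of_lt (sInf_le hmem) ENNReal.ofReal_lt_top
  · intro h
    rw [sGamma] at h
    obtain ⟨x, ⟨κ, hκ, hxeq, hs1, hs2⟩, -⟩ := sInf_lt_iff.mp h
    exact Ncount_bound hb2 hα hβ hγ1 hγ2 hκ hs1 hs2
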